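/- Let u₁, ..., u_n ∈ [0,1], let a > 0, let φ_U(x) = (sin x + i(1 − cos x))/x be the characteristic function of the uniform distribution on (0,1), and let φ̂_n(x) = (1/n) Σ_{j=1}^n e^{i x u_j}. Then n ∫_{−∞}^{∞} |φ_U(x) − φ̂_n(x)|² e^{−a|x|} dx = (1/n) Σ_{j=1}^n Σ_{k=1}^n 2a/((u_j − u_k)² + a²) + 2n[2 arctan(1/a) − a log(1 + 1/a²)] − 4 Σ_{j=1}^n [arctan(u_j/a) + arctan((1 − u_j)/a)]. -/

import Mathlib

open MeasureTheory Real Complex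

open Set Filter


lemma exp_abs_integrable {a : ℝ} (ha : 0 < a) :
    Integrable (fun x : ℝ => Real.exp (-a * |x|)) := by
  have h : IntegrableOn (fun x : ℝ => Real.exp (-a * |x|)) (Ioi 0) :=
    (exp_neg_integrableOn_Ioi 0 ha).congr_fun
      (fun x hx => by rw [abs_of_pos hx]) measurableSet_Ioi
  have m : MeasurableEmbedding fun x : ℝ => -x :=
    (Homeomorph.neg ℝ).measurableEmbedding
  have key : IntegrableOn (fun x : ℝ => Real.exp (-a * |x|)) (Iic 0)
      (Measure.map (fun x : ℝ => -x) volume) := by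
    rw [m.integrableOn_map_iff]
    simp only [Function.comp_def, abs_neg, neg_preimage, neg_Iic, neg_zero]
    exact (integrableOn_Ici_iff_integrableOn_Ioi (by simp)).mpr h
  have h2 : IntegrableOn (fun x : ℝ => Real.exp (-a * |x|)) (Iic 0) := by
    have : (Measure.map (fun x : ℝ => -x) volume) = volume :=
      Measure.map_neg_eq_self (volume : Measure ℝ)
    rwa [this] at key
  rw [← integrableOn_univ, ← Set.Iic_union_Ioi (a := (0:ℝ))]
  exact h2.union h

lemma integrable_of_bound {a : ℝ} (ha : 0 < a) {g : ℝ → ℝ} (c : ℝ)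
    (hm : AEStronglyMeasurable g volume)
    (hb : ∀ x, |g x| ≤ c * Real.exp (-a * |x|)) : Integrable g := by
  refine Integrable.mono ((exp_abs_integrable ha).const_mul c) hm ?_
  filter_upwards with x
  calc ‖g x‖ = |g x| := rfl
    _ ≤ c * Real.exp (-a * |x|) := hb x
    _ ≤ ‖c * Real.exp (-a * |x|)‖ := le_abs_self _

lemma cos_exp_Ioi {a : ℝ} (ha : 0 < a) (b : ℝ) :
    ∫ x in Ioi (0:ℝ), Real.cos (b * x) * Real.exp (-a * x) = a / (a ^ 2 + b ^ 2) := by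
  have hpos : (0:ℝ) < a ^ 2 + b ^ 2 := by positivity
  have hd : ∀ x : ℝ, HasDerivAt
      (fun x => Real.exp (-a * x) * (b * Real.sin (b * x) - a * Real.cos (b * x)) / (a ^ 2 + b ^ 2))
      (Real.cos (b * x) * Real.exp (-a * x)) x := by
    intro x
    have h1 : HasDerivAt (fun x : ℝ => Real.exp (-a * x)) (Real.exp (-a * x) * (-a)) x :=
      by simpa using ((hasDerivAt_id x).const_mul (-a)).exp
    have h2 : HasDerivAt (fun x : ℝ => Real.sin (b * x)) (Real.cos (b * x) * b) x :=
      by simpa using ((hasDerivAt_id x).const_mul b).sin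
    have h3 : HasDerivAt (fun x : ℝ => Real.cos (b * x)) (-Real.sin (b * x) * b) x :=
      by simpa using ((hasDerivAt_id x).const_mul b).cos
    have h4 := ((h1.mul ((h2.const_mul b).sub (h3.const_mul a))).div_const (a ^ 2 + b ^ 2))
    refine h4.congr_deriv ?_
    simp only [Pi.sub_apply]
    field_simp
    ring
  have hint : IntegrableOn (fun x => Real.cos (b * x) * Real.exp (-a * x)) (Ioi 0) := by
    refine Integrable.mono (exp_neg_integrableOn_Ioi 0 ha) ?_ ?_
    · exact ((Real.continuous_cos.comp (continuous_const.mul continuous_id)).mul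
        (Real.continuous_exp.comp (continuous_const.mul continuous_id))).aestronglyMeasurable.restrict
    · filter_upwards with x
      rw [norm_mul]
      calc ‖Real.cos (b * x)‖ * ‖Real.exp (-a * x)‖ ≤ 1 * ‖Real.exp (-a * x)‖ := by
            apply mul_le_mul_of_nonneg_right _ (norm_nonneg _)
            exact abs_le.mpr ⟨Real.neg_one_le_cos _, Real.cos_le_one _⟩
        _ = ‖Real.exp (-a * x)‖ := one_mul _
  have habs : ∀ x : ℝ, |b * Real.sin (b * x) - a * Real.cos (b * x)| ≤ |b| + a := by
    intro x
    calc |b * Real.sin (b * x) - a * Real.cos (b * x)|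
        ≤ |b * Real.sin (b * x)| + |a * Real.cos (b * x)| := abs_sub _ _
      _ ≤ |b| * 1 + |a| * 1 := by
          rw [abs_mul, abs_mul]
          exact add_le_add (mul_le_mul_of_nonneg_left (Real.abs_sin_le_one _) (abs_nonneg _))
            (mul_le_mul_of_nonneg_left (Real.abs_cos_le_one _) (abs_nonneg _))
      _ = |b| + a := by rw [mul_one, mul_one, abs_of_pos ha]
  have hten : Tendsto (fun x => Real.exp (-a * x) * (b * Real.sin (b * x) - a * Real.cos (b * x)) / (a ^ 2 + b ^ 2))
      atTop (nhds 0) := by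
    have h0 : Tendsto (fun x : ℝ => Real.exp (-a * x)) atTop (nhds 0) := by
      simp_rw [neg_mul]
      exact Real.tendsto_exp_neg_atTop_nhds_zero.comp (tendsto_id.const_mul_atTop ha)
    have h1 : Tendsto (fun x : ℝ => Real.exp (-a * x) * ((|b| + a) / (a ^ 2 + b ^ 2)))
        atTop (nhds 0) := by simpa using h0.mul_const ((|b| + a) / (a ^ 2 + b ^ 2))
    refine squeeze_zero_norm (fun x => ?_) h1
    rw [norm_div, norm_mul, Real.norm_eq_abs, Real.norm_eq_abs, Real.norm_eq_abs,
      abs_of_pos hpos, abs_of_pos (Real.exp_pos _), mul_div_assoc]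
    gcongr
    exact habs x
  have := integral_Ioi_of_hasDerivAt_of_tendsto
    (hd 0).continuousAt.continuousWithinAt (fun x _ => hd x) hint hten
  rw [this]
  simp [neg_div]

lemma intA {a : ℝ} (ha : 0 < a) (b : ℝ) :
    ∫ x : ℝ, Real.cos (b * x) * Real.exp (-a * |x|) = 2 * a / (b ^ 2 + a ^ 2) := by
  have key := integral_comp_abs (f := fun t => Real.cos (b * t) * Real.exp (-a * t))
  have hcos : ∀ x : ℝ, Real.cos (b * |x|) = Real.cos (b * x) := by
    intro x
    rcases abs_choice x with h | h
    · rw [h]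
    · rw [h, mul_neg, Real.cos_neg]
  simp only [hcos] at key
  rw [key, cos_exp_Ioi ha b, add_comm]
  ring

lemma intA_integrable {a : ℝ} (ha : 0 < a) (b : ℝ) :
    Integrable (fun x : ℝ => Real.cos (b * x) * Real.exp (-a * |x|)) := by
  refine integrable_of_bound ha 1 ?_ ?_
  · exact ((Real.continuous_cos.comp (continuous_const.mul continuous_id)).mul
      (Real.continuous_exp.comp ((continuous_const.mul continuous_abs)))).aestronglyMeasurable
  · intro x
    rw [abs_mul, one_mul, abs_of_pos (Real.exp_pos _)]
    exact mul_le_of_le_one_left (Real.exp_pos _).le (Real.abs_cos_le_one _)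

-- interval integral of 2a/(a^2+t^2)
lemma T1 {a : ℝ} (ha : 0 < a) (b : ℝ) :
    ∫ t in (0:ℝ)..b, 2 * a / (t ^ 2 + a ^ 2) = 2 * Real.arctan (b / a) := by
  have hd : ∀ t : ℝ, HasDerivAt (fun t => 2 * Real.arctan (t / a)) (2 * a / (t ^ 2 + a ^ 2)) t := by
    intro t
    have h1 : HasDerivAt (fun t : ℝ => t / a) (1 / a) t := by
      simpa using (hasDerivAt_id t).div_const a
    have := ((Real.hasDerivAt_arctan (t / a)).comp t h1).const_mul 2
    refine this.congr_deriv ?_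
    have h2 : (1:ℝ) + (t/a)^2 ≠ 0 := by positivity
    field_simp
    ring
  have hCont : Continuous fun t : ℝ => 2 * a / (t ^ 2 + a ^ 2) := by
    apply continuous_const.div (by continuity)
    intro t; positivity
  rw [intervalIntegral.integral_eq_sub_of_hasDerivAt (fun t _ => hd t)
    (hCont.intervalIntegrable 0 b)]
  simp

-- interval integral of 2 arctan(t/a)
lemma T2 {a : ℝ} (ha : 0 < a) :
    ∫ t in (0:ℝ)..1, 2 * Real.arctan (t / a)
      = 2 * Real.arctan (1 / a) - a * Real.log (1 + 1 / a ^ 2) := by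
  have hd : ∀ t : ℝ, HasDerivAt
      (fun t => 2 * (t * Real.arctan (t / a)) - a * Real.log (1 + t ^ 2 / a ^ 2))
      (2 * Real.arctan (t / a)) t := by
    intro t
    have h1 : HasDerivAt (fun t : ℝ => t / a) (1 / a) t := by
      simpa using (hasDerivAt_id t).div_const a
    have harct : HasDerivAt (fun t : ℝ => Real.arctan (t / a)) (1 / (1 + (t/a)^2) * (1/a)) t := by
      have := (Real.hasDerivAt_arctan (t / a)).comp t h1; exact this
    have hmul : HasDerivAt (fun t : ℝ => t * Real.arctan (t / a))
        (1 * Real.arctan (t / a) + t * (1 / (1 + (t/a)^2) * (1/a))) t :=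
      (hasDerivAt_id t).mul harct
    have hin : HasDerivAt (fun t : ℝ => 1 + t ^ 2 / a ^ 2) (2 * t / a ^ 2) t := by
      have : HasDerivAt (fun t : ℝ => t ^ 2) (2 * t) t := by
        simpa using hasDerivAt_pow 2 t
      simpa using (this.div_const (a ^ 2)).const_add 1
    have hpos : (0:ℝ) < 1 + t ^ 2 / a ^ 2 := by positivity
    have hlog : HasDerivAt (fun t : ℝ => Real.log (1 + t ^ 2 / a ^ 2))
        ((2 * t / a ^ 2) / (1 + t ^ 2 / a ^ 2)) t := hin.log hpos.ne'
    have := (hmul.const_mul 2).sub (hlog.const_mul a)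
    refine this.congr_deriv ?_
    have h2 : (1:ℝ) + (t/a)^2 ≠ 0 := by positivity
    field_simp
    ring
  have hCont : Continuous fun t : ℝ => 2 * Real.arctan (t / a) := by continuity
  rw [intervalIntegral.integral_eq_sub_of_hasDerivAt (fun t _ => hd t)
    (hCont.intervalIntegrable 0 1)]
  simp [div_pow]

lemma ae_ne_zero : ∀ᵐ x : ℝ, x ≠ (0:ℝ) := by
  refine eventually_of_mem (U := ({(0:ℝ)}ᶜ : Set ℝ)) (compl_mem_ae_iff.mpr volume_singleton) fun x hx => ?_
  simpa using hx

lemma sin_div_le (b x : ℝ) : |Real.sin (b * x) / x| ≤ |b| := by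
  rcases eq_or_ne x 0 with h | h
  · simp [h]
  · rw [abs_div]
    rw [div_le_iff₀ (abs_pos.mpr h)]
    calc |Real.sin (b * x)| ≤ |b * x| := Real.abs_sin_le_abs
      _ = |b| * |x| := abs_mul _ _

lemma intB_integrable {a : ℝ} (ha : 0 < a) (b : ℝ) :
    Integrable (fun x : ℝ => Real.sin (b * x) / x * Real.exp (-a * |x|)) := by
  refine integrable_of_bound ha |b| ?_ ?_
  · apply Measurable.aestronglyMeasurable
    exact ((Real.measurable_sin.comp (measurable_id.const_mul b)).div measurable_id).mul
      (Real.measurable_exp.comp (measurable_abs.const_mul (-a)))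
  · intro x
    rw [abs_mul, abs_of_pos (Real.exp_pos _)]
    exact mul_le_mul_of_nonneg_right (sin_div_le b x) (Real.exp_pos _).le

lemma intB {a : ℝ} (ha : 0 < a) {b : ℝ} (hb : 0 ≤ b) :
    ∫ x : ℝ, Real.sin (b * x) / x * Real.exp (-a * |x|) = 2 * Real.arctan (b / a) := by
  rcases hb.eq_or_lt with h | h
  · simp [← h]
  have hFub : Integrable (Function.uncurry fun (x t : ℝ) => Real.cos (t * x) * Real.exp (-a * |x|))
      ((volume : Measure ℝ).prod (volume.restrict (Ioc (0:ℝ) b))) := by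
    have hbig : Integrable (fun p : ℝ × ℝ => Real.exp (-a * |p.1|) * 1)
        ((volume : Measure ℝ).prod (volume.restrict (Ioc (0:ℝ) b))) :=
      (exp_abs_integrable ha).mul_prod (integrableOn_const measure_Ioc_lt_top.ne)
    refine hbig.mono ?_ ?_
    · apply Continuous.aestronglyMeasurable
      exact (Real.continuous_cos.comp (continuous_snd.mul continuous_fst)).mul
        (Real.continuous_exp.comp (continuous_const.mul (continuous_abs.comp continuous_fst)))
    · filter_upwards with p
      rw [Function.uncurry, norm_mul, norm_mul, norm_one, mul_one, Real.norm_eq_abs,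
        Real.norm_eq_abs]
      exact mul_le_of_le_one_left (abs_nonneg _) (Real.abs_cos_le_one _)
  have swap := integral_integral_swap hFub
  have hae : (fun x : ℝ => Real.sin (b * x) / x * Real.exp (-a * |x|))
      =ᵐ[volume] fun x : ℝ => ∫ t in Ioc (0:ℝ) b, Real.cos (t * x) * Real.exp (-a * |x|) := by
    filter_upwards [ae_ne_zero] with x hx
    rw [integral_mul_const, ← intervalIntegral.integral_of_le h.le,
      intervalIntegral.integral_comp_mul_right Real.cos hx]
    simp [integral_cos, div_eq_inv_mul]
  rw [integral_congr_ae hae, swap]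
  have hin : ∀ t : ℝ, (∫ x : ℝ, Real.cos (t * x) * Real.exp (-a * |x|)) = 2 * a / (t ^ 2 + a ^ 2) :=
    intA ha
  simp_rw [hin]
  rw [← intervalIntegral.integral_of_le h.le, T1 ha]

lemma two_sub_two_cos_le (x : ℝ) : 2 - 2 * Real.cos x ≤ x ^ 2 := by
  have h1 : Real.sin (x / 2) ^ 2 = 1 / 2 - Real.cos (2 * (x / 2)) / 2 :=
    Real.sin_sq_eq_half_sub (x / 2)
  have h2 : Real.sin (x / 2) ^ 2 ≤ (x / 2) ^ 2 := Real.sin_sq_le_sq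
  rw [mul_div_cancel₀ _ (two_ne_zero)] at h1
  nlinarith [h1, h2]

lemma intC_integrable {a : ℝ} (ha : 0 < a) :
    Integrable (fun x : ℝ => (2 - 2 * Real.cos x) / x ^ 2 * Real.exp (-a * |x|)) := by
  refine integrable_of_bound ha 1 ?_ ?_
  · apply Measurable.aestronglyMeasurable
    exact (((measurable_const.sub (Real.measurable_cos.const_mul 2))).div
      (measurable_id.pow_const 2)).mul
      (Real.measurable_exp.comp (measurable_abs.const_mul (-a)))
  · intro x
    rw [abs_mul, one_mul, abs_of_pos (Real.exp_pos _)]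
    refine mul_le_of_le_one_left (Real.exp_pos _).le ?_
    rcases eq_or_ne x 0 with h | h
    · simp [h]
    · rw [abs_div, _root_.abs_of_nonneg (by nlinarith [Real.cos_le_one x] : (0:ℝ) ≤ 2 - 2 * Real.cos x),
        abs_of_pos (by positivity : (0:ℝ) < x ^ 2), div_le_one (by positivity)]
      exact two_sub_two_cos_le x

lemma intC {a : ℝ} (ha : 0 < a) :
    ∫ x : ℝ, (2 - 2 * Real.cos x) / x ^ 2 * Real.exp (-a * |x|)
      = 2 * (2 * Real.arctan (1 / a) - a * Real.log (1 + 1 / a ^ 2)) := by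
  have hFub : Integrable
      (Function.uncurry fun (x t : ℝ) => 2 * (Real.sin (t * x) / x * Real.exp (-a * |x|)))
      ((volume : Measure ℝ).prod (volume.restrict (Ioc (0:ℝ) 1))) := by
    have hbig : Integrable (fun p : ℝ × ℝ => Real.exp (-a * |p.1|) * (2 * |p.2|))
        ((volume : Measure ℝ).prod (volume.restrict (Ioc (0:ℝ) 1))) :=
      (exp_abs_integrable ha).mul_prod
        ((continuous_const.mul continuous_abs : Continuous fun t : ℝ => 2 * |t|).integrableOn_Ioc)
    refine hbig.mono ?_ ?_
    · apply Measurable.aestronglyMeasurable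
      exact (((Real.measurable_sin.comp (measurable_snd.mul measurable_fst)).div
        measurable_fst).mul
        (Real.measurable_exp.comp (measurable_abs.comp measurable_fst |>.const_mul (-a)))).const_mul 2
    · filter_upwards with p
      rw [Function.uncurry, Real.norm_eq_abs, Real.norm_eq_abs, abs_mul, abs_mul,
        abs_of_pos (Real.exp_pos _), abs_mul, abs_of_pos (Real.exp_pos _)]
      have h2 : |(2:ℝ)| = 2 := by norm_num
      rw [h2]
      calc 2 * (|Real.sin (p.2 * p.1) / p.1| * Real.exp (-a * |p.1|))
          ≤ 2 * (|p.2| * Real.exp (-a * |p.1|)) := by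
            apply mul_le_mul_of_nonneg_left _ (by norm_num)
            exact mul_le_mul_of_nonneg_right (sin_div_le p.2 p.1) (Real.exp_pos _).le
        _ = Real.exp (-a * |p.1|) * (2 * |p.2|) := by ring
        _ ≤ Real.exp (-a * |p.1|) * _root_.abs (2 * _root_.abs p.2) := by
            exact mul_le_mul_of_nonneg_left (le_abs_self _) (Real.exp_pos _).le
  have swap := integral_integral_swap hFub
  have hae : (fun x : ℝ => (2 - 2 * Real.cos x) / x ^ 2 * Real.exp (-a * |x|))
      =ᵐ[volume] fun x : ℝ =>
        ∫ t in Ioc (0:ℝ) 1, 2 * (Real.sin (t * x) / x * Real.exp (-a * |x|)) := by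
    filter_upwards [ae_ne_zero] with x hx
    have : ∀ t : ℝ, 2 * (Real.sin (t * x) / x * Real.exp (-a * |x|))
        = Real.sin (t * x) * (2 / x * Real.exp (-a * |x|)) := by intro t; ring
    simp_rw [this]
    rw [integral_mul_const, ← intervalIntegral.integral_of_le zero_le_one,
      intervalIntegral.integral_comp_mul_right Real.sin hx]
    simp only [one_mul, zero_mul, integral_sin, Real.cos_zero, smul_eq_mul]
    field_simp
  rw [integral_congr_ae hae, swap]
  have hin : ∀ t ∈ Ioc (0:ℝ) 1,
      (∫ x : ℝ, 2 * (Real.sin (t * x) / x * Real.exp (-a * |x|))) = 2 * (2 * Real.arctan (t / a)) := by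
    intro t ht
    rw [MeasureTheory.integral_const_mul, intB ha ht.1.le]
  rw [setIntegral_congr_fun measurableSet_Ioc hin, ← intervalIntegral.integral_of_le zero_le_one]
  have : ∀ t : ℝ, 2 * (2 * Real.arctan (t / a)) = 2 * (2 * Real.arctan (t / a)) := fun _ => rfl
  rw [show (fun t : ℝ => 2 * (2 * Real.arctan (t / a))) = fun t => (2:ℝ) * (2 * Real.arctan (t / a)) from rfl]
  rw [intervalIntegral.integral_const_mul, T2 ha]

lemma key_expand {n : ℕ} (hn : (n:ℝ) ≠ 0) (u : Fin n → ℝ) (x : ℝ) (hx : x ≠ 0) :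
    (Real.sin x / x - (n:ℝ)⁻¹ * ∑ j, Real.cos (u j * x)) ^ 2
      + ((1 - Real.cos x) / x - (n:ℝ)⁻¹ * ∑ j, Real.sin (u j * x)) ^ 2
    = (2 - 2 * Real.cos x) / x ^ 2
      - 2 * (n:ℝ)⁻¹ * ∑ j, (Real.sin (u j * x) / x + Real.sin ((1 - u j) * x) / x)
      + ((n:ℝ) ^ 2)⁻¹ * ∑ j, ∑ k, Real.cos ((u j - u k) * x) := by
  have h1 : ∑ j, (Real.sin (u j * x) / x + Real.sin ((1 - u j) * x) / x)
      = (Real.sin x * ∑ j, Real.cos (u j * x)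
        + (1 - Real.cos x) * ∑ j, Real.sin (u j * x)) / x := by
    rw [Finset.mul_sum, Finset.mul_sum, ← Finset.sum_add_distrib, Finset.sum_div]
    refine Finset.sum_congr rfl fun j _ => ?_
    have e : (1 - u j) * x = x - u j * x := by ring
    rw [e, Real.sin_sub, add_div]
    ring
  have h2 : (∑ j, Real.cos (u j * x)) ^ 2 + (∑ j, Real.sin (u j * x)) ^ 2
      = ∑ j, ∑ k, Real.cos ((u j - u k) * x) := by
    rw [sq, sq, Finset.sum_mul_sum, Finset.sum_mul_sum, ← Finset.sum_add_distrib]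
    refine Finset.sum_congr rfl fun j _ => ?_
    rw [← Finset.sum_add_distrib]
    refine Finset.sum_congr rfl fun k _ => ?_
    have e : (u j - u k) * x = u j * x - u k * x := by ring
    rw [e, Real.cos_sub]
  have h3 : Real.sin x ^ 2 + (1 - Real.cos x) ^ 2 = 2 - 2 * Real.cos x := by
    have := Real.sin_sq_add_cos_sq x; nlinarith
  rw [h1, ← h2, ← h3]
  field_simp
  ring


/-- Closed form of the characteristic-function-based statistic `S_{n,a}`:
for `u₁, …, uₙ ∈ [0,1]` and `a > 0`,
`n ∫ |φ_U(x) - φ̂ₙ(x)|² e^{-a|x|} dx` equals the stated triple-sum expression,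
where `φ_U` is the cf of the uniform distribution on `(0,1)` and `φ̂ₙ` is the ecf. -/
theorem stmt15 (n : ℕ) (hn : 0 < n) (u : Fin n → ℝ) (hu : ∀ j, u j ∈ Set.Icc (0:ℝ) 1)
    (a : ℝ) (ha : 0 < a)
    (φU : ℝ → ℂ)
    (hφU : ∀ x : ℝ, φU x = ((Real.sin x : ℂ) + Complex.I * (1 - (Real.cos x : ℂ))) / (x : ℂ))
    (φn : ℝ → ℂ)
    (hφn : ∀ x : ℝ, φn x = (n : ℂ)⁻¹ * ∑ j, Complex.exp (Complex.I * (x : ℂ) * (u j : ℂ))) :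
    (n : ℝ) * ∫ x : ℝ, ‖φU x - φn x‖ ^ 2 * Real.exp (-a * |x|) =
      (n : ℝ)⁻¹ * (∑ j, ∑ k, 2 * a / ((u j - u k) ^ 2 + a ^ 2))
      + 2 * (n : ℝ) * (2 * Real.arctan (1 / a) - a * Real.log (1 + 1 / a ^ 2))
      - 4 * ∑ j, (Real.arctan (u j / a) + Real.arctan ((1 - u j) / a)) := by
  have hn0 : (n:ℝ) ≠ 0 := Nat.cast_ne_zero.mpr hn.ne'
  -- re/im of φn
  have hφn_re : ∀ x : ℝ, (φn x).re = (n:ℝ)⁻¹ * ∑ j, Real.cos (u j * x) := by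
    intro x
    rw [hφn x]
    have he : ∀ j : Fin n, Complex.exp (Complex.I * (x:ℂ) * (u j : ℂ))
        = Complex.exp ((((u j) * x : ℝ) : ℂ) * Complex.I) := by
      intro j; congr 1; push_cast; ring
    simp_rw [he]
    rw [show ((n:ℂ))⁻¹ = (((n:ℝ)⁻¹ : ℝ) : ℂ) by push_cast; ring]
    rw [Complex.re_ofReal_mul]
    congr 1
    rw [Complex.re_sum]
    exact Finset.sum_congr rfl fun j _ => Complex.exp_ofReal_mul_I_re _
  have hφn_im : ∀ x : ℝ, (φn x).im = (n:ℝ)⁻¹ * ∑ j, Real.sin (u j * x) := by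
    intro x
    rw [hφn x]
    have he : ∀ j : Fin n, Complex.exp (Complex.I * (x:ℂ) * (u j : ℂ))
        = Complex.exp ((((u j) * x : ℝ) : ℂ) * Complex.I) := by
      intro j; congr 1; push_cast; ring
    simp_rw [he]
    rw [show ((n:ℂ))⁻¹ = (((n:ℝ)⁻¹ : ℝ) : ℂ) by push_cast; ring]
    rw [Complex.im_ofReal_mul]
    congr 1
    rw [Complex.im_sum]
    exact Finset.sum_congr rfl fun j _ => Complex.exp_ofReal_mul_I_im _
  -- re/im of φU away from 0
  have hφU_eq : ∀ x : ℝ, x ≠ 0 → φU x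
      = ((Real.sin x / x : ℝ) : ℂ) + (((1 - Real.cos x) / x : ℝ) : ℂ) * Complex.I := by
    intro x hx
    have hxc : (x:ℂ) ≠ 0 := Complex.ofReal_ne_zero.mpr hx
    rw [hφU x]
    field_simp
    push_cast
    ring_nf
    simp only [mul_inv_cancel_right₀ hxc]
    ring
  -- pointwise identity
  have hptws : ∀ x : ℝ, x ≠ 0 →
      ‖φU x - φn x‖ ^ 2 * Real.exp (-a * |x|)
      = (2 - 2 * Real.cos x) / x ^ 2 * Real.exp (-a * |x|)
        - 2 * (n:ℝ)⁻¹ * ∑ j, (Real.sin (u j * x) / x * Real.exp (-a * |x|)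
            + Real.sin ((1 - u j) * x) / x * Real.exp (-a * |x|))
        + ((n:ℝ) ^ 2)⁻¹ * ∑ j, ∑ k, Real.cos ((u j - u k) * x) * Real.exp (-a * |x|) := by
    intro x hx
    have habs : ‖φU x - φn x‖ ^ 2
        = (Real.sin x / x - (n:ℝ)⁻¹ * ∑ j, Real.cos (u j * x)) ^ 2
          + ((1 - Real.cos x) / x - (n:ℝ)⁻¹ * ∑ j, Real.sin (u j * x)) ^ 2 := by
      rw [Complex.sq_norm, Complex.normSq_apply, Complex.sub_re, Complex.sub_im,
        hφn_re, hφn_im, hφU_eq x hx]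
      simp only [Complex.add_re, Complex.add_im, Complex.ofReal_re, Complex.ofReal_im,
        Complex.mul_re, Complex.mul_im, Complex.I_re, Complex.I_im]
      ring
    have e1 : ∑ j, (Real.sin (u j * x) / x * Real.exp (-a * |x|)
        + Real.sin ((1 - u j) * x) / x * Real.exp (-a * |x|))
        = (∑ j, (Real.sin (u j * x) / x + Real.sin ((1 - u j) * x) / x)) * Real.exp (-a * |x|) := by
      rw [Finset.sum_mul]
      exact Finset.sum_congr rfl fun j _ => by ring
    have e2 : ∑ j, ∑ k, Real.cos ((u j - u k) * x) * Real.exp (-a * |x|)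
        = (∑ j, ∑ k, Real.cos ((u j - u k) * x)) * Real.exp (-a * |x|) := by
      rw [Finset.sum_mul]
      exact Finset.sum_congr rfl fun j _ => by rw [Finset.sum_mul]
    rw [habs, key_expand hn0 u x hx, e1, e2]
    ring
  have hae : (fun x : ℝ => ‖φU x - φn x‖ ^ 2 * Real.exp (-a * |x|))
      =ᵐ[volume] (fun x : ℝ =>
        (2 - 2 * Real.cos x) / x ^ 2 * Real.exp (-a * |x|)
        - 2 * (n:ℝ)⁻¹ * ∑ j, (Real.sin (u j * x) / x * Real.exp (-a * |x|)
            + Real.sin ((1 - u j) * x) / x * Real.exp (-a * |x|))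
        + ((n:ℝ) ^ 2)⁻¹ * ∑ j, ∑ k, Real.cos ((u j - u k) * x) * Real.exp (-a * |x|)) := by
    filter_upwards [ae_ne_zero] with x hx
    exact hptws x hx
  have hB1 : ∀ j : Fin n, Integrable (fun x : ℝ => Real.sin (u j * x) / x * Real.exp (-a * |x|)
      + Real.sin ((1 - u j) * x) / x * Real.exp (-a * |x|)) := fun j =>
    (intB_integrable ha (u j)).add (intB_integrable ha (1 - u j))
  have hg1 : Integrable (fun x : ℝ => ∑ j, (Real.sin (u j * x) / x * Real.exp (-a * |x|)
      + Real.sin ((1 - u j) * x) / x * Real.exp (-a * |x|))) :=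
    integrable_finset_sum _ fun j _ => hB1 j
  have hg2 : Integrable (fun x : ℝ => ∑ j, ∑ k, Real.cos ((u j - u k) * x) * Real.exp (-a * |x|)) :=
    integrable_finset_sum _ fun j _ => integrable_finset_sum _ fun k _ =>
      intA_integrable ha (u j - u k)
  have hI1 : (∫ x : ℝ, ∑ j, (Real.sin (u j * x) / x * Real.exp (-a * |x|)
      + Real.sin ((1 - u j) * x) / x * Real.exp (-a * |x|)))
      = ∑ j, (2 * Real.arctan (u j / a) + 2 * Real.arctan ((1 - u j) / a)) := by
    rw [integral_finset_sum _ fun j _ => hB1 j]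
    refine Finset.sum_congr rfl fun j _ => ?_
    rw [integral_add (intB_integrable ha (u j)) (intB_integrable ha (1 - u j)),
      intB ha (hu j).1, intB ha (by linarith [(hu j).2] : (0:ℝ) ≤ 1 - u j)]
  have hI2 : (∫ x : ℝ, ∑ j, ∑ k, Real.cos ((u j - u k) * x) * Real.exp (-a * |x|))
      = ∑ j, ∑ k, 2 * a / ((u j - u k) ^ 2 + a ^ 2) := by
    rw [integral_finset_sum _ fun j _ => integrable_finset_sum _ fun k _ =>
      intA_integrable ha (u j - u k)]
    refine Finset.sum_congr rfl fun j _ => ?_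
    rw [integral_finset_sum _ fun k _ => intA_integrable ha (u j - u k)]
    exact Finset.sum_congr rfl fun k _ => intA ha (u j - u k)
  have hsubInt : Integrable (fun x : ℝ => (2 - 2 * Real.cos x) / x ^ 2 * Real.exp (-a * |x|)
      - 2 * (n:ℝ)⁻¹ * ∑ j, (Real.sin (u j * x) / x * Real.exp (-a * |x|)
        + Real.sin ((1 - u j) * x) / x * Real.exp (-a * |x|))) :=
    (intC_integrable ha).sub (hg1.const_mul _)
  have hmul1 : Integrable (fun x : ℝ => 2 * (n:ℝ)⁻¹ * ∑ j,
      (Real.sin (u j * x) / x * Real.exp (-a * |x|)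
        + Real.sin ((1 - u j) * x) / x * Real.exp (-a * |x|))) := hg1.const_mul _
  have hmul2 : Integrable (fun x : ℝ => ((n:ℝ) ^ 2)⁻¹ * ∑ j, ∑ k,
      Real.cos ((u j - u k) * x) * Real.exp (-a * |x|)) := hg2.const_mul _
  rw [integral_congr_ae hae, integral_add hsubInt hmul2,
    integral_sub (intC_integrable ha) hmul1, MeasureTheory.integral_const_mul,
    MeasureTheory.integral_const_mul, intC ha, hI1, hI2]
  have hsum : ∑ j, (2 * Real.arctan (u j / a) + 2 * Real.arctan ((1 - u j) / a))
      = 2 * ∑ j, (Real.arctan (u j / a) + Real.arctan ((1 - u j) / a)) := by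
    rw [Finset.mul_sum]
    exact Finset.sum_congr rfl fun j _ => by ring
  rw [hsum]
  field_simp
  ring
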